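/- Let A = Mₙ(ℂ). Then the open subsets of Σ_* are in bijective correspondence with the monotone projection assignments, i.e. the functions S assigning to each context C a projection S(C) ∈ C such that C ⊆ C' implies S(C) ≤ S(C'); the bijection sends such an S to the open set U_S := {(C,λ) ∈ Σ : λ(S(C)) = 1}, so that (U_S)_C is the clopen subset of Σ_C determined by the projection S(C). -/

import Mathlib

open WeakDual

variable (n : ℕ)

/-- A classical context in `Mₙ(ℂ)`: a commutative unital star-subalgebra. -/
structure MContext where
  carrier : Subalgebra ℂ (Matrix (Fin n) (Fin n) ℂ)
  star_mem' : ∀ x ∈ carrier, star x ∈ carrier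
  mul_comm' : ∀ x ∈ carrier, ∀ y ∈ carrier, x * y = y * x

variable {n}

/-- The Gelfand spectrum of a context: the character space of `C`. -/
abbrev MContext.Spec (C : MContext n) : Type _ := characterSpace ℂ C.carrier

/-- The inclusion of a smaller context into a larger one, as a continuous linear map. -/
def MContext.inclCLM {D C : MContext n} (h : D.carrier ≤ C.carrier) :
    D.carrier →L[ℂ] C.carrier where
  toLinearMap := (Subalgebra.inclusion h).toLinearMap
  cont := continuous_induced_rng.mpr continuous_subtype_val

/-- Restriction of a character along an inclusion of contexts. -/
noncomputable def MContext.restrictChar {D C : MContext n} (h : D.carrier ≤ C.carrier)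
    (lam : C.Spec) : D.Spec :=
  ⟨(lam : WeakDual ℂ C.carrier).comp (MContext.inclCLM h), by
    constructor
    · intro h0
      have h1 : (lam : WeakDual ℂ C.carrier).comp (MContext.inclCLM h) (1 : D.carrier) = 0 := by
        rw [h0]; rfl
      have h2 : (lam : WeakDual ℂ C.carrier).comp (MContext.inclCLM h) (1 : D.carrier) = 1 := by
        show lam ((MContext.inclCLM h) (1 : D.carrier)) = 1
        have h3 : (MContext.inclCLM h) (1 : D.carrier) = (1 : C.carrier) := rfl
        rw [h3]
        exact map_one lam
      rw [h1] at h2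
      exact zero_ne_one h2
    · intro x y
      show lam ((MContext.inclCLM h) (x * y))
          = lam ((MContext.inclCLM h) x) * lam ((MContext.inclCLM h) y)
      have h4 : (MContext.inclCLM h) (x * y)
          = (MContext.inclCLM h) x * (MContext.inclCLM h) y := rfl
      rw [h4]
      exact map_mul lam _ _⟩

/-- The disjoint union of all Gelfand spectra of contexts. -/
abbrev MSigmaSpace (n : ℕ) : Type _ := (C : MContext n) × C.Spec

/-- The topology `𝒪 Σ_*` of the covariant approach: a set is open iff each of its fibres
is open and it is closed under passing to extensions of characters. -/
instance : TopologicalSpace (MSigmaSpace n) where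
  IsOpen U := (∀ C : MContext n, IsOpen {lam : C.Spec | Sigma.mk C lam ∈ U}) ∧
    ∀ (C C' : MContext n) (h : C.carrier ≤ C'.carrier) (lam' : C'.Spec),
      Sigma.mk C (MContext.restrictChar h lam') ∈ U → Sigma.mk C' lam' ∈ U
  isOpen_univ := ⟨fun _ => isOpen_univ, fun _ _ _ _ _ => trivial⟩
  isOpen_inter := fun U V hU hV => ⟨fun C => (hU.1 C).inter (hV.1 C),
    fun C C' h lam hm => ⟨hU.2 C C' h lam hm.1, hV.2 C C' h lam hm.2⟩⟩
  isOpen_sUnion := fun S hS => by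
    constructor
    · intro C
      have h1 : {lam : C.Spec | Sigma.mk C lam ∈ ⋃₀ S} =
          ⋃ U ∈ S, {lam : C.Spec | Sigma.mk C lam ∈ U} := by
        ext lam; simp
      rw [h1]
      exact isOpen_biUnion fun U hU => (hS U hU).1 C
    · rintro C C' h lam ⟨U, hUS, hmU⟩
      exact ⟨U, hUS, (hS U hUS).2 C C' h lam hmU⟩

open scoped ComplexOrder

variable (n) in
/-- A monotone projection assignment: a choice, for each context `C` of `Mₙ(ℂ)`, of a
projection `S(C) ∈ C`, monotone (in the Loewner order) in the context. -/
structure ProjAssignment where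
  toFun : MContext n → Matrix (Fin n) (Fin n) ℂ
  mem' : ∀ C : MContext n, toFun C ∈ C.carrier
  star_eq' : ∀ C : MContext n, star (toFun C) = toFun C
  idem' : ∀ C : MContext n, toFun C * toFun C = toFun C
  mono' : ∀ C C' : MContext n, C.carrier ≤ C'.carrier → (toFun C' - toFun C).PosSemidef

/-- The subset of `Σ_*` associated to a monotone projection assignment `S`: the pairs
`(C, λ)` with `λ (S C) = 1`. -/
def ProjAssignment.embed (S : ProjAssignment n) : Set (MSigmaSpace n) :=
  {p : MSigmaSpace n | p.2 ⟨S.toFun p.1, S.mem' p.1⟩ = 1}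

namespace MProof
open scoped ComplexOrder
open Matrix

lemma psd_neg_eq_zero {n : ℕ} {M : Matrix (Fin n) (Fin n) ℂ} (h1 : M.PosSemidef)
    (h2 : (-M).PosSemidef) : M = 0 := by
  have hz : ∀ v, M *ᵥ v = 0 := by
    intro v
    rw [← h1.dotProduct_mulVec_zero_iff]
    have a1 := h1.dotProduct_mulVec_nonneg v
    have a2 := h2.dotProduct_mulVec_nonneg v
    rw [Matrix.neg_mulVec, dotProduct_neg, neg_nonneg] at a2
    exact le_antisymm a2 a1
  ext i j
  have := congrFun (hz (Pi.single j 1)) i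
  simpa [Matrix.mulVec_single] using this

lemma proj_mul_of_loewner_le {n : ℕ} {p q : Matrix (Fin n) (Fin n) ℂ}
    (hp : pᴴ = p) (hp2 : p * p = p) (hq2 : q * q = q)
    (hpsd : (q - p).PosSemidef) : q * p = p := by
  have hq : qᴴ = q := by
    have h := hpsd.isHermitian
    rw [Matrix.IsHermitian, conjTranspose_sub, hp, sub_left_inj] at h
    exact h
  have h1' : p * q * (q * p) = p * q * p := by
    rw [mul_assoc p q (q * p), ← mul_assoc q q p, hq2, ← mul_assoc]
  have hA : (p - q * p)ᴴ * (p - q * p) = p - p * q * p := by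
    rw [conjTranspose_sub, conjTranspose_mul, hp, hq]
    rw [sub_mul, mul_sub, mul_sub, hp2, h1', ← mul_assoc]
    abel
  have hNeq : pᴴ * (q - p) * p = p * q * p - p := by
    rw [hp, mul_sub, sub_mul, hp2, mul_assoc, hp2]
  have hN : (p * q * p - p).PosSemidef := hNeq ▸ hpsd.conjTranspose_mul_mul_same p
  have hX : (p - p * q * p).PosSemidef := hA ▸ Matrix.posSemidef_conjTranspose_mul_self _
  have hzero : p - p * q * p = 0 := psd_neg_eq_zero hX (by rwa [neg_sub])
  have hx0 : p - q * p = 0 := by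
    have : (p - q * p)ᴴ * (p - q * p) = 0 := by rw [hA, hzero]
    exact Matrix.conjTranspose_mul_self_eq_zero.mp this
  rw [sub_eq_zero] at hx0
  exact hx0.symm

lemma herm_pow_eq_zero {n : ℕ} : ∀ (k : ℕ) (h : Matrix (Fin n) (Fin n) ℂ),
    hᴴ = h → h ^ k = 0 → h = 0 := by
  intro k
  induction k using Nat.strong_induction_on with
  | _ k ih =>
    intro h hherm hk
    match k, hk with
    | 0, hk =>
      have h0 : (1 : Matrix (Fin n) (Fin n) ℂ) = 0 := by simpa using hk
      calc h = h * 1 := by rw [mul_one]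
      _ = 0 := by rw [h0, mul_zero]
    | 1, hk => simpa using hk
    | (m+2), hk =>
      set j := (m + 3) / 2 with hj
      have hjlt : j < m + 2 := by omega
      have h2j : m + 2 ≤ 2 * j := by omega
      have hpow : h ^ (2 * j) = 0 := by
        rw [show 2 * j = (m + 2) + (2 * j - (m + 2)) by omega, pow_add, hk, zero_mul]
      refine ih j hjlt h hherm ?_
      have hz : (h ^ j)ᴴ * (h ^ j) = 0 := by
        rw [conjTranspose_pow, hherm, ← pow_add]
        rw [two_mul] at hpow
        exact hpow
      exact Matrix.conjTranspose_mul_self_eq_zero.mp hz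

lemma star_comm_nilpotent_eq_zero {n : ℕ} {a : Matrix (Fin n) (Fin n) ℂ}
    (hc : aᴴ * a = a * aᴴ) {k : ℕ} (hk : a ^ k = 0) : a = 0 := by
  have hcomm : Commute aᴴ a := hc
  have h1 : (aᴴ * a) ^ k = 0 := by
    rw [hcomm.mul_pow, ← conjTranspose_pow, hk, conjTranspose_zero, zero_mul]
  have hherm : (aᴴ * a)ᴴ = aᴴ * a := by
    rw [conjTranspose_mul, conjTranspose_conjTranspose]
  exact Matrix.conjTranspose_mul_self_eq_zero.mp (herm_pow_eq_zero k _ hherm h1)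

end MProof
namespace MProof
open Matrix
open scoped Classical

variable {n : ℕ}

instance (C : MContext n) : CommRing C.carrier :=
  { (inferInstance : Ring C.carrier) with
    mul_comm := fun a b => Subtype.ext (C.mul_comm' a.1 a.2 b.1 b.2) }

instance (C : MContext n) : FiniteDimensional ℂ C.carrier :=
  FiniteDimensional.of_injective (Subalgebra.val C.carrier).toLinearMap Subtype.val_injective

instance (C : MContext n) : IsArtinianRing C.carrier :=
  isArtinian_of_tower ℂ inferInstance

instance (C : MContext n) : IsTopologicalRing C.carrier where
  continuous_add := continuous_induced_rng.mpr
    ((continuous_subtype_val.comp continuous_fst).add (continuous_subtype_val.comp continuous_snd))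
  continuous_mul := continuous_induced_rng.mpr
    ((continuous_subtype_val.comp continuous_fst).mul (continuous_subtype_val.comp continuous_snd))
  continuous_neg := continuous_induced_rng.mpr continuous_subtype_val.neg

instance (C : MContext n) : ContinuousSMul ℂ C.carrier :=
  ⟨continuous_induced_rng.mpr (continuous_fst.smul (continuous_subtype_val.comp continuous_snd))⟩

end MProof
namespace MProof
open Matrix WeakDual
variable {n : ℕ} (C : MContext n)

/-- A character, as an `AlgHom`. -/
noncomputable def charAlgHom (lam : C.Spec) : C.carrier →ₐ[ℂ] ℂ :=
  WeakDual.CharacterSpace.toAlgHom lam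

lemma char_surjective (lam : C.Spec) : Function.Surjective (lam : C.carrier → ℂ) :=
  fun c => ⟨algebraMap ℂ C.carrier c, AlgHomClass.commutes lam c⟩

/-- The kernel of a character. -/
noncomputable def charKer (lam : C.Spec) : Ideal C.carrier :=
  RingHom.ker ((WeakDual.CharacterSpace.toAlgHom lam) : C.carrier →+* ℂ)

lemma mem_charKer (lam : C.Spec) (x : C.carrier) : x ∈ charKer C lam ↔ lam x = 0 :=
  RingHom.mem_ker

instance charKer_isMaximal (lam : C.Spec) : (charKer C lam).IsMaximal :=
  RingHom.ker_isMaximal_of_surjective _ (char_surjective C lam)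

lemma char_eq_of_zero_imp (lam mu : C.Spec) (h : ∀ x, lam x = 0 → mu x = 0) : lam = mu := by
  ext x
  have h1 : lam (x - algebraMap ℂ C.carrier (lam x)) = 0 := by
    simp [map_sub, AlgHomClass.commutes]
  have h2 := h _ h1
  simp only [map_sub, AlgHomClass.commutes, Algebra.algebraMap_self_apply, sub_eq_zero] at h2
  exact h2.symm

end MProof
namespace MProof
open Matrix WeakDual
variable {n : ℕ} (C : MContext n)

set_option maxHeartbeats 1000000 in
set_option synthInstance.maxHeartbeats 400000 in
lemma exists_char_of_max (m : Ideal C.carrier) (hm : m.IsMaximal) :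
    ∃ lam : C.Spec, ∀ x, lam x = 0 ↔ x ∈ m := by
  classical
  haveI := hm
  letI : Field (C.carrier ⧸ m) := Ideal.Quotient.field m
  haveI : Module.Finite ℂ (C.carrier ⧸ m) :=
    Module.Finite.of_surjective (Ideal.Quotient.mkₐ ℂ m).toLinearMap Ideal.Quotient.mk_surjective
  haveI : Algebra.IsIntegral ℂ (C.carrier ⧸ m) := Algebra.IsIntegral.of_finite ℂ _
  have hsurj : Function.Surjective (algebraMap ℂ (C.carrier ⧸ m)) :=
    IsAlgClosed.algebraMap_bijective_of_isIntegral.2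
  have hinj : Function.Injective (algebraMap ℂ (C.carrier ⧸ m)) := (algebraMap ℂ _).injective
  let e : ℂ ≃+* (C.carrier ⧸ m) := RingEquiv.ofBijective (algebraMap ℂ _) ⟨hinj, hsurj⟩
  let ψ : C.carrier →+* ℂ := e.symm.toRingHom.comp (Ideal.Quotient.mk m)
  have hψc : ∀ c : ℂ, ψ (algebraMap ℂ C.carrier c) = c := by
    intro c
    have h1 : Ideal.Quotient.mk m (algebraMap ℂ C.carrier c) = algebraMap ℂ (C.carrier ⧸ m) c :=
      Ideal.Quotient.mk_algebraMap (R₁ := ℂ) (I := m) c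
    show e.symm (Ideal.Quotient.mk m (algebraMap ℂ C.carrier c)) = c
    rw [h1]
    have h2 : e c = algebraMap ℂ (C.carrier ⧸ m) c := rfl
    rw [← h2]
    exact e.symm_apply_apply c
  let lin : C.carrier →ₗ[ℂ] ℂ :=
    { toFun := ψ
      map_add' := fun a b => ψ.map_add a b
      map_smul' := by
        intro c y
        simp only [RingHom.id_apply, smul_eq_mul]
        rw [Algebra.smul_def, ψ.map_mul, hψc] }
  have hcont : Continuous lin := lin.continuous_of_finiteDimensional
  let lam : C.Spec := ⟨⟨lin, hcont⟩, by
    refine ⟨?_, fun x y => ψ.map_mul x y⟩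
    intro h0
    have h2' := congrArg (fun f : WeakDual ℂ C.carrier => f 1) h0
    have h2 : ψ (1 : C.carrier) = 0 := h2'
    rw [ψ.map_one] at h2
    exact one_ne_zero h2⟩
  refine ⟨lam, fun x => ?_⟩
  show ψ x = 0 ↔ x ∈ m
  constructor
  · intro hx
    have hx' : e.symm (Ideal.Quotient.mk m x) = 0 := hx
    have h3 : Ideal.Quotient.mk m x = 0 := by
      have h4 := congrArg e hx'
      rwa [RingEquiv.apply_symm_apply, _root_.map_zero] at h4
    exact Ideal.Quotient.eq_zero_iff_mem.mp h3
  · intro hx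
    show e.symm (Ideal.Quotient.mk m x) = 0
    rw [Ideal.Quotient.eq_zero_iff_mem.mpr hx, _root_.map_zero]

/-- A character with kernel a given maximal ideal. -/
noncomputable def charOfMax (m : Ideal C.carrier) (hm : m.IsMaximal) : C.Spec :=
  (exists_char_of_max C m hm).choose

lemma charOfMax_spec (m : Ideal C.carrier) (hm : m.IsMaximal) (x : C.carrier) :
    charOfMax C m hm x = 0 ↔ x ∈ m :=
  (exists_char_of_max C m hm).choose_spec x

end MProof
namespace MProof
open Matrix WeakDual
variable {n : ℕ} (C : MContext n)

lemma subtype_nilpotent_eq_zero {x : C.carrier} (hx : IsNilpotent x) : x = 0 := by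
  obtain ⟨k, hk⟩ := hx
  have hval : (x : Matrix (Fin n) (Fin n) ℂ) ^ k = 0 := by
    have := congrArg (Subtype.val) hk
    simpa using this
  have hcomm : (x : Matrix (Fin n) (Fin n) ℂ)ᴴ * (x : Matrix (Fin n) (Fin n) ℂ)
      = (x : Matrix (Fin n) (Fin n) ℂ) * (x : Matrix (Fin n) (Fin n) ℂ)ᴴ :=
    C.mul_comm' _ (C.star_mem' _ x.2) _ x.2
  exact Subtype.ext (star_comm_nilpotent_eq_zero hcomm hval)

instance : IsReduced C.carrier := ⟨fun x hx => subtype_nilpotent_eq_zero C hx⟩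

lemma eq_zero_of_forall_char {x : C.carrier} (hx : ∀ lam : C.Spec, lam x = 0) : x = 0 := by
  refine subtype_nilpotent_eq_zero C (nilpotent_iff_mem_prime.mpr fun J hJ => ?_)
  haveI := hJ
  haveI : J.IsMaximal := IsArtinianRing.isMaximal_of_isPrime J
  exact (charOfMax_spec C J this x).mp (hx _)

end MProof
namespace MProof
open scoped Matrix
open WeakDual
variable {n : ℕ} (C : MContext n)

lemma isUnit_subtype {z : C.carrier} (hz : IsUnit (z : Matrix (Fin n) (Fin n) ℂ)) :
    IsUnit z := by
  let L : C.carrier →ₗ[ℂ] C.carrier :=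
    { toFun := fun c => z * c
      map_add' := fun a b => mul_add z a b
      map_smul' := fun c a => by simpa using (mul_smul_comm c z a) }
  have hinj : Function.Injective L := by
    intro a b hab
    have h1 : z * a - z * b = 0 := by
      rw [show (z * a : C.carrier) = L a from rfl, show (z * b : C.carrier) = L b from rfl,
        hab, sub_self]
    rw [← mul_sub] at h1
    have h2 : (z : Matrix (Fin n) (Fin n) ℂ) * ((a - b : C.carrier) : Matrix (Fin n) (Fin n) ℂ)
        = 0 := by
      have := congrArg Subtype.val h1
      simpa using this
    have h3 : ((a - b : C.carrier) : Matrix (Fin n) (Fin n) ℂ) = 0 :=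
      (IsUnit.mul_right_eq_zero hz).mp h2
    have h4 : a - b = 0 := Subtype.ext h3
    rw [sub_eq_zero] at h4
    exact h4
  have hsurj : Function.Surjective L := (LinearMap.injective_iff_surjective).mp hinj
  obtain ⟨y, hy⟩ := hsurj 1
  exact IsUnit.of_mul_eq_one y hy

lemma char_real_on_herm (lam : C.Spec) (x : C.carrier)
    (hx : (x : Matrix (Fin n) (Fin n) ℂ)ᴴ = (x : Matrix (Fin n) (Fin n) ℂ)) :
    (starRingEnd ℂ) (lam x) = lam x := by
  set c : ℂ := lam x with hc
  set z : C.carrier := x - algebraMap ℂ C.carrier c with hzdef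
  have hz0 : lam z = 0 := by
    rw [hzdef, map_sub, AlgHomClass.commutes]
    simp [hc]
  have hnu : ¬ IsUnit z := by
    intro hu
    obtain ⟨u, hu'⟩ := hu
    have h1 : lam (z * ((u⁻¹ : C.carrierˣ) : C.carrier)) = 0 := by
      rw [_root_.map_mul, hz0, zero_mul]
    rw [← hu', Units.mul_inv, _root_.map_one] at h1
    exact one_ne_zero h1
  have hnum : ¬ IsUnit (z : Matrix (Fin n) (Fin n) ℂ) := fun h => hnu (isUnit_subtype C h)
  have hdet : (z : Matrix (Fin n) (Fin n) ℂ).det = 0 := by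
    by_contra hd
    exact hnum ((Matrix.isUnit_iff_isUnit_det _).mpr (isUnit_iff_ne_zero.mpr hd))
  obtain ⟨v, hvz, hv0⟩ := (Matrix.exists_mulVec_eq_zero_iff).mpr hdet
  have hzval : (z : Matrix (Fin n) (Fin n) ℂ)
      = (x : Matrix (Fin n) (Fin n) ℂ) - c • (1 : Matrix (Fin n) (Fin n) ℂ) := by
    rw [hzdef]
    simp [Algebra.algebraMap_eq_smul_one]
  have hxv : (x : Matrix (Fin n) (Fin n) ℂ) *ᵥ v = c • v := by
    have h5 : ((x : Matrix (Fin n) (Fin n) ℂ) - c • 1) *ᵥ v = 0 := by rw [← hzval]; exact hv0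
    rw [Matrix.sub_mulVec, sub_eq_zero] at h5
    rw [h5, Matrix.smul_mulVec, Matrix.one_mulVec]
  have hs : star v ⬝ᵥ v ≠ 0 := fun h => hvz (dotProduct_star_self_eq_zero.mp h)
  have ha1 : star v ⬝ᵥ ((x : Matrix (Fin n) (Fin n) ℂ) *ᵥ v) = c * (star v ⬝ᵥ v) := by
    rw [hxv, dotProduct_smul, smul_eq_mul]
  have hss : star (star v ⬝ᵥ v) = star v ⬝ᵥ v := (Matrix.star_dotProduct v v).symm
  have ha2 : star (star v ⬝ᵥ ((x : Matrix (Fin n) (Fin n) ℂ) *ᵥ v))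
      = star v ⬝ᵥ ((x : Matrix (Fin n) (Fin n) ℂ) *ᵥ v) := by
    conv_rhs => rw [Matrix.star_dotProduct]
    congr 1
    rw [Matrix.star_mulVec, hx, ← Matrix.dotProduct_mulVec]
  have hb : star (c * (star v ⬝ᵥ v)) = star c * (star v ⬝ᵥ v) := by
    rw [star_mul', hss]
  have h8 : star c * (star v ⬝ᵥ v) = c * (star v ⬝ᵥ v) := by
    rw [← hb, ← ha1]
    rw [ha2, ha1]
  have h9 : star c = c := mul_right_cancel₀ hs h8
  rw [starRingEnd_apply]
  exact h9
end MProof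
namespace MProof
open scoped Matrix
open WeakDual
variable {n : ℕ} (C : MContext n)

lemma char_star (lam : C.Spec) (x : C.carrier) :
    lam ⟨star (x : Matrix (Fin n) (Fin n) ℂ), C.star_mem' _ x.2⟩
      = (starRingEnd ℂ) (lam x) := by
  set xs : C.carrier := ⟨star (x : Matrix (Fin n) (Fin n) ℂ), C.star_mem' _ x.2⟩ with hxs
  have hval : (xs : Matrix (Fin n) (Fin n) ℂ) = star (x : Matrix (Fin n) (Fin n) ℂ) := rfl
  have hherm1 : ((x + xs : C.carrier) : Matrix (Fin n) (Fin n) ℂ)ᴴ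
      = ((x + xs : C.carrier) : Matrix (Fin n) (Fin n) ℂ) := by
    push_cast [hval]
    rw [← Matrix.star_eq_conjTranspose]
    simp [star_add, add_comm]
  have hherm2 : ((Complex.I • (x - xs) : C.carrier) : Matrix (Fin n) (Fin n) ℂ)ᴴ
      = ((Complex.I • (x - xs) : C.carrier) : Matrix (Fin n) (Fin n) ℂ) := by
    push_cast [hval]
    rw [← Matrix.star_eq_conjTranspose]
    simp [star_smul, star_sub, Complex.star_def, Complex.conj_I, smul_sub, neg_smul, smul_neg]
    abel
  have h1 := char_real_on_herm C lam (x + xs) hherm1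
  have h2 := char_real_on_herm C lam (Complex.I • (x - xs)) hherm2
  rw [map_add] at h1
  rw [map_add (starRingEnd ℂ)] at h1
  have hsm : lam (Complex.I • (x - xs)) = Complex.I * (lam x - lam xs) := by
    rw [map_smul, map_sub, smul_eq_mul]
  rw [hsm, map_mul (starRingEnd ℂ), map_sub (starRingEnd ℂ), Complex.conj_I] at h2
  linear_combination (-(1/2 : ℂ)) * h1 - (Complex.I/2) * h2 +
    ((-(starRingEnd ℂ) (lam x) + (starRingEnd ℂ) (lam xs) - lam x + lam xs)/2) * Complex.I_mul_I
end MProof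
namespace MProof
open scoped Matrix Classical
open WeakDual
variable {n : ℕ} (C : MContext n)

set_option synthInstance.maxHeartbeats 1000000 in
set_option maxHeartbeats 1000000 in
/-- The projection in `C` whose Gelfand transform is the indicator of `T`. -/
noncomputable def projOf (T : Set C.Spec) : C.carrier :=
  (IsArtinianRing.equivPi C.carrier).symm
    (fun I => Ideal.Quotient.mk I.1
      (if charOfMax C I.1 I.2 ∈ T then (1 : C.carrier) else 0))

set_option synthInstance.maxHeartbeats 1000000 in
set_option maxHeartbeats 1000000 in
lemma projOf_spec (T : Set C.Spec) (lam : C.Spec) :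
    lam (projOf C T) = if lam ∈ T then 1 else 0 := by
  set m : Ideal C.carrier := charKer C lam with hm
  have hmmax : m.IsMaximal := charKer_isMaximal C lam
  have hchar : charOfMax C m hmmax = lam := by
    refine char_eq_of_zero_imp C _ _ (fun x hx => ?_)
    have h1 := (charOfMax_spec C m hmmax x).mp hx
    exact (mem_charKer C lam x).mp h1
  have happ : (IsArtinianRing.equivPi C.carrier) (projOf C T)
      = (fun I : MaximalSpectrum C.carrier => Ideal.Quotient.mk I.1
          (if charOfMax C I.1 I.2 ∈ T then (1 : C.carrier) else 0)) :=
    (IsArtinianRing.equivPi C.carrier).apply_symm_apply _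
  have hcomp : Ideal.Quotient.mk m (projOf C T)
      = Ideal.Quotient.mk m (if charOfMax C m hmmax ∈ T then (1 : C.carrier) else 0) :=
    congrFun happ ⟨m, hmmax⟩
  rw [hchar] at hcomp
  have hsub : projOf C T - (if lam ∈ T then (1 : C.carrier) else 0) ∈ m :=
    Ideal.Quotient.eq.mp hcomp
  have hlam0 : lam (projOf C T - (if lam ∈ T then (1 : C.carrier) else 0)) = 0 :=
    (mem_charKer C lam _).mpr hsub
  rw [map_sub, sub_eq_zero] at hlam0
  rw [hlam0]
  split_ifs
  · exact _root_.map_one lam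
  · exact _root_.map_zero lam

lemma char_idem_01 (lam : C.Spec) {p : C.carrier} (hp : p * p = p) :
    lam p = 0 ∨ lam p = 1 := by
  have h1 : lam p = lam p * lam p := by rw [← _root_.map_mul, hp]
  have h2 : lam p * (lam p - 1) = 0 := by linear_combination -h1
  rcases mul_eq_zero.mp h2 with h3 | h3
  · exact Or.inl h3
  · exact Or.inr (sub_eq_zero.mp h3)

end MProof
namespace MProof
open scoped Matrix Classical
open WeakDual
variable {n : ℕ} (C : MContext n)

lemma projOf_idem (T : Set C.Spec) : projOf C T * projOf C T = projOf C T := by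
  have h0 : projOf C T * projOf C T - projOf C T = 0 := by
    refine eq_zero_of_forall_char C (fun lam => ?_)
    rw [map_sub, _root_.map_mul, projOf_spec]
    split_ifs <;> norm_num
  have h1 := sub_eq_zero.mp h0
  exact h1

lemma projOf_star (T : Set C.Spec) :
    star ((projOf C T : C.carrier) : Matrix (Fin n) (Fin n) ℂ)
      = ((projOf C T : C.carrier) : Matrix (Fin n) (Fin n) ℂ) := by
  have hmem := C.star_mem' _ (projOf C T).2
  have h0 : (⟨star ((projOf C T : C.carrier) : Matrix (Fin n) (Fin n) ℂ), hmem⟩ : C.carrier)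
      - projOf C T = 0 := by
    refine eq_zero_of_forall_char C (fun lam => ?_)
    rw [map_sub]
    have h1 : lam (⟨star ((projOf C T : C.carrier) : Matrix (Fin n) (Fin n) ℂ), hmem⟩ : C.carrier)
        = (starRingEnd ℂ) (lam (projOf C T)) := char_star C lam (projOf C T)
    rw [h1, projOf_spec, sub_eq_zero]
    split_ifs <;> simp
  have h1 := sub_eq_zero.mp h0
  exact congrArg Subtype.val h1

lemma topo_isOpen_iff (U : Set (MSigmaSpace n)) : IsOpen U ↔
    ((∀ C : MContext n, IsOpen {lam : C.Spec | Sigma.mk C lam ∈ U}) ∧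
      ∀ (C C' : MContext n) (h : C.carrier ≤ C'.carrier) (lam' : C'.Spec),
        Sigma.mk C (MContext.restrictChar h lam') ∈ U → Sigma.mk C' lam' ∈ U) := Iff.rfl

end MProof
open scoped Matrix Classical

/-- For `A = Mₙ(ℂ)`, the open subsets of `Σ_*` are in bijective
correspondence with the monotone projection assignments, via `S ↦ {(C,λ) : λ (S C) = 1}`. -/
theorem statement18 :
    (∀ S : ProjAssignment n, IsOpen S.embed) ∧
    Function.Injective (ProjAssignment.embed (n := n)) ∧
    (∀ U : Set (MSigmaSpace n), IsOpen U → ∃ S : ProjAssignment n, S.embed = U) := by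
  refine ⟨?_, ?_, ?_⟩
  · -- openness
    intro S
    refine (MProof.topo_isOpen_iff _).mpr ⟨?_, ?_⟩
    · intro C
      have hpC : (⟨S.toFun C, S.mem' C⟩ : C.carrier) * ⟨S.toFun C, S.mem' C⟩
          = ⟨S.toFun C, S.mem' C⟩ := Subtype.ext (S.idem' C)
      have hcont : Continuous (fun lam : C.Spec => lam (⟨S.toFun C, S.mem' C⟩ : C.carrier)) :=
        (WeakDual.eval_continuous _).comp continuous_subtype_val
      have hset : {lam : C.Spec | Sigma.mk C lam ∈ S.embed}
          = (fun lam : C.Spec => lam (⟨S.toFun C, S.mem' C⟩ : C.carrier)) ⁻¹' {(0 : ℂ)}ᶜ := by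
        ext lam
        simp only [Set.mem_setOf_eq, Set.mem_preimage, Set.mem_compl_iff, Set.mem_singleton_iff]
        show lam (⟨S.toFun C, S.mem' C⟩ : C.carrier) = 1 ↔ _
        constructor
        · intro h1
          rw [h1]
          exact one_ne_zero
        · intro hne
          rcases MProof.char_idem_01 C lam hpC with h1 | h1
          · exact absurd h1 hne
          · exact h1
      rw [hset]
      exact IsOpen.preimage hcont isOpen_compl_singleton
    · intro Cc C' h lam' hmem
      show lam' (⟨S.toFun C', S.mem' C'⟩ : C'.carrier) = 1
      have hqp : S.toFun C' * S.toFun Cc = S.toFun Cc := by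
        refine MProof.proj_mul_of_loewner_le ?_ (S.idem' Cc) (S.idem' C') (S.mono' Cc C' h)
        rw [← Matrix.star_eq_conjTranspose]
        exact S.star_eq' Cc
      have hsub : (⟨S.toFun C', S.mem' C'⟩ : C'.carrier) * ⟨S.toFun Cc, h (S.mem' Cc)⟩
          = ⟨S.toFun Cc, h (S.mem' Cc)⟩ := Subtype.ext hqp
      have h1 : lam' (⟨S.toFun Cc, h (S.mem' Cc)⟩ : C'.carrier) = 1 := hmem
      have h2 := _root_.map_mul lam' (⟨S.toFun C', S.mem' C'⟩ : C'.carrier)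
        (⟨S.toFun Cc, h (S.mem' Cc)⟩ : C'.carrier)
      rw [hsub, h1, mul_one] at h2
      exact h2.symm
  · -- injectivity
    intro S T hST
    have htf : S.toFun = T.toFun := by
      funext Cc
      have hpS : (⟨S.toFun Cc, S.mem' Cc⟩ : Cc.carrier) * ⟨S.toFun Cc, S.mem' Cc⟩
          = ⟨S.toFun Cc, S.mem' Cc⟩ := Subtype.ext (S.idem' Cc)
      have hpT : (⟨T.toFun Cc, T.mem' Cc⟩ : Cc.carrier) * ⟨T.toFun Cc, T.mem' Cc⟩
          = ⟨T.toFun Cc, T.mem' Cc⟩ := Subtype.ext (T.idem' Cc)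
      have hiff : ∀ lam : Cc.Spec,
          lam (⟨S.toFun Cc, S.mem' Cc⟩ : Cc.carrier) = 1 ↔
          lam (⟨T.toFun Cc, T.mem' Cc⟩ : Cc.carrier) = 1 := by
        intro lam
        exact Set.ext_iff.mp hST (Sigma.mk Cc lam)
      have hz : (⟨S.toFun Cc, S.mem' Cc⟩ - ⟨T.toFun Cc, T.mem' Cc⟩ : Cc.carrier) = 0 := by
        refine MProof.eq_zero_of_forall_char Cc (fun lam => ?_)
        rw [map_sub, sub_eq_zero]
        rcases MProof.char_idem_01 Cc lam hpS with h1 | h1 <;>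
          rcases MProof.char_idem_01 Cc lam hpT with h2 | h2
        · rw [h1, h2]
        · exact absurd ((hiff lam).mpr h2) (by rw [h1]; norm_num)
        · exact absurd ((hiff lam).mp h1) (by rw [h2]; norm_num)
        · rw [h1, h2]
      rw [sub_eq_zero] at hz
      exact congrArg Subtype.val hz
    cases S
    cases T
    simp only at htf
    subst htf
    rfl
  · -- surjectivity
    intro U hU
    set T : (C : MContext n) → Set C.Spec := fun C => {lam | Sigma.mk C lam ∈ U} with hTdef
    have hstar : ∀ C : MContext n, star ((MProof.projOf C (T C) : C.carrier) :
        Matrix (Fin n) (Fin n) ℂ) = ((MProof.projOf C (T C) : C.carrier) :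
        Matrix (Fin n) (Fin n) ℂ) := fun C => MProof.projOf_star C (T C)
    refine ⟨{ toFun := fun C => ((MProof.projOf C (T C) : C.carrier) : Matrix (Fin n) (Fin n) ℂ)
              mem' := fun C => (MProof.projOf C (T C)).2
              star_eq' := hstar
              idem' := fun C => congrArg Subtype.val (MProof.projOf_idem C (T C))
              mono' := ?_ }, ?_⟩
    · intro C C' h
      set pC' : C'.carrier := MProof.projOf C' (T C') with hpC'
      set pCl : C'.carrier := ⟨(MProof.projOf C (T C) : C.carrier), h (MProof.projOf C (T C)).2⟩
        with hpCl
      set d : C'.carrier := pC' - pCl with hd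
      have hdval : (d : Matrix (Fin n) (Fin n) ℂ)
          = ((pC' : Matrix (Fin n) (Fin n) ℂ)) - ((pCl : Matrix (Fin n) (Fin n) ℂ)) := rfl
      have hdidem : d * d = d := by
        have h0 : d * d - d = 0 := by
          refine MProof.eq_zero_of_forall_char C' (fun lam' => ?_)
          have hv1 : lam' pC' = if lam' ∈ T C' then (1 : ℂ) else 0 := MProof.projOf_spec C' _ _
          have hv2 : lam' pCl = if MContext.restrictChar h lam' ∈ T C then (1 : ℂ) else 0 :=
            MProof.projOf_spec C (T C) (MContext.restrictChar h lam')
          have himp : MContext.restrictChar h lam' ∈ T C → lam' ∈ T C' :=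
            fun hm => (MProof.topo_isOpen_iff U).mp hU |>.2 C C' h lam' hm
          rw [map_sub, _root_.map_mul, map_sub, hv1, hv2]
          by_cases hb : MContext.restrictChar h lam' ∈ T C
          · rw [if_pos hb, if_pos (himp hb)]
            norm_num
          · rw [if_neg hb]
            split_ifs <;> norm_num
        have h1 := sub_eq_zero.mp h0
        exact h1
      have hdherm : star (d : Matrix (Fin n) (Fin n) ℂ) = (d : Matrix (Fin n) (Fin n) ℂ) := by
        rw [hdval, star_sub]
        rw [show ((pCl : Matrix (Fin n) (Fin n) ℂ)) = ((MProof.projOf C (T C) : C.carrier) :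
          Matrix (Fin n) (Fin n) ℂ) from rfl]
        rw [hstar C, hstar C']
      have hdvalidem : (d : Matrix (Fin n) (Fin n) ℂ) * (d : Matrix (Fin n) (Fin n) ℂ)
          = (d : Matrix (Fin n) (Fin n) ℂ) := congrArg Subtype.val hdidem
      have hpsd : ((d : Matrix (Fin n) (Fin n) ℂ)).PosSemidef := by
        have : (d : Matrix (Fin n) (Fin n) ℂ)
            = ((d : Matrix (Fin n) (Fin n) ℂ))ᴴ * (d : Matrix (Fin n) (Fin n) ℂ) := by
          rw [← Matrix.star_eq_conjTranspose, hdherm]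
          exact hdvalidem.symm
        rw [this]
        exact Matrix.posSemidef_conjTranspose_mul_self _
      show (((pC' : Matrix (Fin n) (Fin n) ℂ)) - _).PosSemidef
      exact hpsd
    · ext x
      rcases x with ⟨Cc, lam⟩
      show lam (⟨((MProof.projOf Cc (T Cc) : Cc.carrier) : Matrix (Fin n) (Fin n) ℂ),
        (MProof.projOf Cc (T Cc)).2⟩ : Cc.carrier) = 1 ↔ Sigma.mk Cc lam ∈ U
      have he : (⟨((MProof.projOf Cc (T Cc) : Cc.carrier) : Matrix (Fin n) (Fin n) ℂ),
          (MProof.projOf Cc (T Cc)).2⟩ : Cc.carrier) = MProof.projOf Cc (T Cc) := rfl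
      rw [he, MProof.projOf_spec]
      constructor
      · intro h1
        by_contra hm
        rw [if_neg (show lam ∉ T Cc from hm)] at h1
        exact zero_ne_one h1
      · intro hm
        rw [if_pos (show lam ∈ T Cc from hm)]
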